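/- Let A be a pointed regular category with kernels and cokernels (i.e., A has finite limits, every morphism factors as a regular epimorphism followed by a monomorphism, and regular epimorphisms are stable under pullback). Given composable arrows A →^f B →^g C →^h D, if the composite f·g·h is proper, f is an epimorphism, and h is a monomorphism, then g is proper. -/

import Mathlib

open CategoryTheory CategoryTheory.Limits

noncomputable section

universe v u

variable {A : Type u} [Category.{v} A] [HasZeroMorphisms A] [HasKernels A] [HasCokernels A]

/-- The canonical factorization of an arrow through the kernel of its cokernel. -/
def properFact {X Y : A} (u : X ⟶ Y) : X ⟶ kernel (cokernel.π u) :=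
  kernel.lift (cokernel.π u) u (cokernel.condition u)

/-- An arrow is proper if its canonical factorization through the kernel of its
cokernel is a regular epimorphism. -/
def IsProper {X Y : A} (u : X ⟶ Y) : Prop :=
  Nonempty (RegularEpi (properFact u))

/-- A regular epimorphism composed with an isomorphism is a regular epimorphism. -/
def regularEpi_comp_isIso {C : Type u} [Category.{v} C] {X Y Z : C}
    (e : X ⟶ Y) (m : Y ⟶ Z) (re : RegularEpi e) [IsIso m] : RegularEpi (e ≫ m) where
  W := re.W
  left := re.left
  right := re.right
  w := by rw [← Category.assoc, ← Category.assoc, re.w]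
  isColimit := by
    refine Cofork.IsColimit.mk _ (fun s => inv m ≫ re.isColimit.desc s)
      (fun s => ?_) (fun s t ht => ?_)
    · show (e ≫ m) ≫ inv m ≫ re.isColimit.desc s = _
      rw [Category.assoc, IsIso.hom_inv_id_assoc]
      simpa using re.isColimit.fac s WalkingParallelPair.one
    · have h1 : e ≫ m ≫ t = Cofork.π s := by
        simpa using ht
      have h2 : m ≫ t = re.isColimit.desc s := by
        apply Cofork.IsColimit.hom_ext re.isColimit
        simp only [Cofork.IsColimit.π_desc]
        rw [← Category.assoc] at h1 ⊢
        simpa using h1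
      show t = inv m ≫ re.isColimit.desc s
      rw [← h2, IsIso.inv_hom_id_assoc]

/-- If `v ≫ w` is a regular epimorphism and the category has (regular epi, mono)
factorizations, then `w` is a regular epimorphism. -/
lemma regularEpi_of_comp_regularEpi {C : Type u} [Category.{v} C]
    (hfact : ∀ {X Y : C} (f : X ⟶ Y), ∃ (I : C) (e : X ⟶ I) (m : I ⟶ Y),
        Nonempty (RegularEpi e) ∧ Mono m ∧ e ≫ m = f)
    {U V T : C} (v : U ⟶ V) (w : V ⟶ T)
    (hr : Nonempty (RegularEpi (v ≫ w))) : Nonempty (RegularEpi w) := by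
  obtain ⟨I, e, m, ⟨re⟩, hm, hem⟩ := hfact w
  haveI := re
  haveI := hm
  haveI := hr.some
  haveI : StrongEpi (v ≫ w) := by haveI := isRegularEpi_of_regularEpi hr.some; infer_instance
  have sq : CommSq (v ≫ e) (v ≫ w) m (𝟙 T) := ⟨by
    rw [Category.comp_id, Category.assoc, hem]⟩
  haveI : IsSplitEpi m := IsSplitEpi.mk' ⟨sq.lift, sq.fac_right⟩
  haveI : IsIso m := isIso_of_mono_of_isSplitEpi m
  haveI : RegularEpi (e ≫ m) := regularEpi_comp_isIso e m re
  exact ⟨hem ▸ this⟩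

/-- **Statement 12** (Lemma: properness from a sandwiched composite).
Let `A` be a pointed regular category with kernels and cokernels (finite limits,
(regular epi, mono) factorizations, regular epis stable under pullback).  Given
composable arrows `f, g, h`, if `f ≫ g ≫ h` is proper, `f` is an epimorphism and `h` is
a monomorphism, then `g` is proper. -/
theorem proper_of_epi_comp_mono
    (A : Type u) [Category.{v} A] [HasZeroObject A] [HasZeroMorphisms A]
    [HasFiniteLimits A] [HasKernels A] [HasCokernels A]
    (hfact : ∀ {X Y : A} (f : X ⟶ Y), ∃ (I : A) (e : X ⟶ I) (m : I ⟶ Y),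
        Nonempty (RegularEpi e) ∧ Mono m ∧ e ≫ m = f)
    (hstab : ∀ {P X Y Z : A} (fst : P ⟶ X) (snd : P ⟶ Y) (u : X ⟶ Z) (v : Y ⟶ Z),
        IsPullback fst snd u v → Nonempty (RegularEpi v) → Nonempty (RegularEpi fst))
    {W X Y Z : A} (f : W ⟶ X) (g : X ⟶ Y) (h : Y ⟶ Z)
    (hp : IsProper (f ≫ g ≫ h)) (hf : Epi f) (hm : Mono h) :
    IsProper g := by
  set u : W ⟶ Z := f ≫ g ≫ h with hu
  -- g ≫ h is killed by the cokernel projection of u, since f is an epi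
  have hgh0 : (g ≫ h) ≫ cokernel.π u = 0 := by
    rw [← cancel_epi f, comp_zero, ← Category.assoc, ← hu]
    exact cokernel.condition u
  -- the comparison map p' : X ⟶ ker (coker u)
  set p' : X ⟶ kernel (cokernel.π u) := kernel.lift (cokernel.π u) (g ≫ h) hgh0 with hp'
  have hfp' : f ≫ p' = properFact u := by
    rw [← cancel_mono (kernel.ι (cokernel.π u))]
    simp [hp', properFact, hu]
  -- p' is a regular epi, by cancellation from the regular epi properFact u
  have hrep' : Nonempty (RegularEpi p') :=
    regularEpi_of_comp_regularEpi hfact f p' (hfp' ▸ hp)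
  -- h ≫ cokernel.π u factors through cokernel g
  have hg0 : g ≫ h ≫ cokernel.π u = 0 := by rw [← Category.assoc]; exact hgh0
  have hκ : (kernel.ι (cokernel.π g) ≫ h) ≫ cokernel.π u = 0 := by
    rw [Category.assoc, ← cokernel.π_desc g (h ≫ cokernel.π u) hg0, ← Category.assoc,
      kernel.condition, zero_comp]
  -- the comparison map λ' : ker (coker g) ⟶ ker (coker u), a mono
  set l : kernel (cokernel.π g) ⟶ kernel (cokernel.π u) :=
    kernel.lift (cokernel.π u) (kernel.ι (cokernel.π g) ≫ h) hκ with hl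
  haveI hmono : Mono l := by
    have : Mono (l ≫ kernel.ι (cokernel.π u)) := by
      rw [hl, kernel.lift_ι]; exact mono_comp _ _
    exact mono_of_mono l (kernel.ι (cokernel.π u))
  -- properFact g composed with l equals p'
  have hpg : properFact g ≫ l = p' := by
    rw [← cancel_mono (kernel.ι (cokernel.π u))]
    simp [hl, hp', properFact]
  -- pull back p' along l : the first projection is a regular epi by stability
  have isPB := IsPullback.of_hasPullback l p'
  have hfst : Nonempty (RegularEpi (pullback.fst l p')) :=
    hstab (pullback.fst l p') (pullback.snd l p') l p' isPB hrep'
  -- the second projection composed with properFact g is the first projection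
  have key : pullback.snd l p' ≫ properFact g = pullback.fst l p' := by
    rw [← cancel_mono l]
    simp only [Category.assoc, hpg]
    exact pullback.condition.symm
  -- conclude by cancellation
  exact regularEpi_of_comp_regularEpi hfact (pullback.snd l p') (properFact g)
    (key ▸ hfst)
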